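/- Let L be a Lie algebra over a field K of characteristic ≠ 2, generated by two extremal elements x, y with associated linear forms f_x, f_y (so ⁅x,⁅x,m⁆⁆ = f_x(m) • x and ⁅y,⁅y,m⁆⁆ = f_y(m) • y for all m ∈ L). If ⁅x,y⁆ ≠ 0 and the family (x, y, ⁅x,y⁆) is linearly independent, then f_x(y) = f_y(x). -/
import Mathlib


theorem fxy_eq_fyx {K L : Type*} [Field K] [LieRing L] [LieAlgebra K L]
    (hchar : (2 : K) ≠ 0) (x y : L) (fx fy : L →ₗ[K] K)
    (hx : ∀ m : L, ⁅x, ⁅x, m⁆⁆ = fx m • x)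
    (hy : ∀ m : L, ⁅y, ⁅y, m⁆⁆ = fy m • y)
    (hgen : LieSubalgebra.lieSpan K L {x, y} = ⊤)
    (hne : ⁅x, y⁆ ≠ 0)
    (hind : LinearIndependent K ![x, y, ⁅x, y⁆]) :
    fx y = fy x := by
  have h2 : ⁅y, ⁅x, y⁆⁆ = -(fy x • y) := by
    rw [← lie_skew x y, lie_neg, hy x]
  have h1 : ⁅y, ⁅x, ⁅x, y⁆⁆⁆ = -(fx y • ⁅x, y⁆) := by
    rw [hx y, lie_smul, ← lie_skew y x, smul_neg]
  have h3 : ⁅y, ⁅x, ⁅x, y⁆⁆⁆ = -(fy x • ⁅x, y⁆) := by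
    have hl := leibniz_lie x y ⁅x, y⁆
    rw [lie_self, zero_add] at hl
    rw [← hl, h2, lie_neg, lie_smul]
  have h4 : fx y • ⁅x, y⁆ = fy x • ⁅x, y⁆ := by
    have := h1.symm.trans h3
    exact neg_injective this
  have h5 : (fx y - fy x) • ⁅x, y⁆ = 0 := by
    rw [sub_smul, h4, sub_self]
  rcases smul_eq_zero.mp h5 with h | h
  · exact sub_eq_zero.mp h
  · exact absurd h hne
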